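/- Let n ≥ 3 and let f = (f_0, …, f_n) be a non-degenerate symmetric signature of arity n. Then f satisfies a second order recurrence relation with coefficients (a, b, c) (not all zero) satisfying b² − 4ac ≠ 0 if and only if there exist a_0, b_0, a_1, b_1 ∈ ℂ with a_0 b_1 ≠ a_1 b_0 such that f_k = a_0^{n−k} b_0^k + a_1^{n−k} b_1^k for all 0 ≤ k ≤ n. -/

import Mathlib

private lemma geom_degenerate (n : ℕ) (hn : 0 < n) (f : ℕ → ℂ) (β r : ℂ)
    (h : ∀ k ≤ n, f k = β * r ^ k) :
    ∃ a b : ℂ, ∀ k ≤ n, f k = a ^ (n - k) * b ^ k := by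
  obtain ⟨u, hu⟩ := IsAlgClosed.exists_pow_nat_eq (k := ℂ) β hn
  refine ⟨u, u * r, fun k hk => ?_⟩
  rw [h k hk, mul_pow, ← mul_assoc, ← pow_add, Nat.sub_add_cancel hk, hu]

private lemma forward_main (n : ℕ) (hn : 3 ≤ n) (f : ℕ → ℂ)
    (hnd : ¬ ∃ a b : ℂ, ∀ k ≤ n, f k = a ^ (n - k) * b ^ k)
    (r₀ r₁ : ℂ) (hr : r₀ ≠ r₁)
    (hrec : ∀ k, k + 2 ≤ n → f (k+2) = (r₀ + r₁) * f (k+1) - r₀ * r₁ * f k) :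
    ∃ a₀ b₀ a₁ b₁ : ℂ, a₀ * b₁ ≠ a₁ * b₀ ∧
      ∀ k ≤ n, f k = a₀ ^ (n - k) * b₀ ^ k + a₁ ^ (n - k) * b₁ ^ k := by
  have hd : r₀ - r₁ ≠ 0 := sub_ne_zero.mpr hr
  obtain ⟨α, β, hab0, hab1⟩ :
      ∃ α β : ℂ, f 0 = α + β ∧ f 1 = α * r₀ + β * r₁ := by
    refine ⟨(f 1 - r₁ * f 0) / (r₀ - r₁), (r₀ * f 0 - f 1) / (r₀ - r₁), ?_, ?_⟩
    · field_simp
      ring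
    · field_simp
      ring
  have key : ∀ k, k + 1 ≤ n → f k = α * r₀ ^ k + β * r₁ ^ k ∧
      f (k+1) = α * r₀ ^ (k+1) + β * r₁ ^ (k+1) := by
    intro k
    induction k with
    | zero =>
      intro _
      refine ⟨by rw [hab0]; ring, by rw [hab1]; ring⟩
    | succ m ih =>
      intro h
      have hm := ih (by omega)
      refine ⟨hm.2, ?_⟩
      have e : m + 1 + 1 = m + 2 := by omega
      rw [e, hrec m (by omega), hm.1, hm.2]
      ring
  have all : ∀ k ≤ n, f k = α * r₀ ^ k + β * r₁ ^ k := by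
    intro k hk
    rcases Nat.lt_or_ge k n with h | h
    · exact (key k (by omega)).1
    · have hkn : k = n := by omega
      rw [hkn]
      have h2 := (key (n-1) (by omega)).2
      have hn1 : n - 1 + 1 = n := by omega
      rwa [hn1] at h2
  have hα : α ≠ 0 := by
    intro h0
    refine hnd (geom_degenerate n (by omega) f β r₁ fun k hk => ?_)
    rw [all k hk, h0]; ring
  have hβ : β ≠ 0 := by
    intro h0
    refine hnd (geom_degenerate n (by omega) f α r₀ fun k hk => ?_)
    rw [all k hk, h0]; ring
  obtain ⟨u, hu⟩ := IsAlgClosed.exists_pow_nat_eq (k := ℂ) α (by omega : 0 < n)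
  obtain ⟨v, hv⟩ := IsAlgClosed.exists_pow_nat_eq (k := ℂ) β (by omega : 0 < n)
  have hu0 : u ≠ 0 := by
    intro h; apply hα; rw [← hu, h, zero_pow (by omega : n ≠ 0)]
  have hv0 : v ≠ 0 := by
    intro h; apply hβ; rw [← hv, h, zero_pow (by omega : n ≠ 0)]
  refine ⟨u, u * r₀, v, v * r₁, ?_, fun k hk => ?_⟩
  · intro h
    exact hr (mul_left_cancel₀ (mul_ne_zero hu0 hv0)
      (show u * v * r₀ = u * v * r₁ by linear_combination -h))
  · rw [all k hk, mul_pow, mul_pow, ← mul_assoc, ← mul_assoc, ← pow_add, ← pow_add,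
      Nat.sub_add_cancel hk, hu, hv]

theorem stmt_3 (n : ℕ) (hn : 3 ≤ n) (f : ℕ → ℂ)
    (hnd : ¬ ∃ a b : ℂ, ∀ k ≤ n, f k = a ^ (n - k) * b ^ k) :
    (∃ a b c : ℂ, (a, b, c) ≠ 0 ∧ b ^ 2 - 4 * a * c ≠ 0 ∧
        ∀ k, k + 2 ≤ n → a * f k + b * f (k + 1) + c * f (k + 2) = 0) ↔
      (∃ a₀ b₀ a₁ b₁ : ℂ, a₀ * b₁ ≠ a₁ * b₀ ∧
        ∀ k ≤ n, f k = a₀ ^ (n - k) * b₀ ^ k + a₁ ^ (n - k) * b₁ ^ k) := by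
  constructor
  · rintro ⟨a, b, c, -, hdisc, hrec⟩
    rcases eq_or_ne c 0 with rfl | hc
    · -- c = 0 : geometric up to n-1, plus a delta at n
      have hb : b ≠ 0 := by
        intro h; apply hdisc; rw [h]; ring
      obtain ⟨r, hr'⟩ : ∃ r : ℂ, r * b = -a := ⟨-a / b, by field_simp⟩
      have hgeo : ∀ k, k + 1 ≤ n → f k = f 0 * r ^ k := by
        intro k
        induction k with
        | zero => intro _; simp
        | succ m ih =>
          intro h
          have h1 := hrec m (by omega)
          rw [ih (by omega)] at h1
          have h2 : f (m+1) * b = r * (f 0 * r ^ m) * b := by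
            linear_combination h1 - f 0 * r ^ m * hr'
          have h3 := mul_right_cancel₀ hb h2
          rw [h3, pow_succ]
          ring
      have h0 : f 0 ≠ 0 := by
        intro h
        obtain ⟨w, hw⟩ := IsAlgClosed.exists_pow_nat_eq (k := ℂ) (f n) (by omega : 0 < n)
        refine hnd ⟨0, w, fun k hk => ?_⟩
        rcases Nat.lt_or_ge k n with hlt | hge
        · rw [hgeo k (by omega), h, zero_mul, zero_pow (by omega : n - k ≠ 0), zero_mul]
        · have hkn : k = n := by omega
          rw [hkn, Nat.sub_self, pow_zero, one_mul, hw]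
      have hd : f n - f 0 * r ^ n ≠ 0 := by
        intro h
        refine hnd (geom_degenerate n (by omega) f (f 0) r fun k hk => ?_)
        rcases Nat.lt_or_ge k n with hlt | hge
        · exact hgeo k (by omega)
        · have hkn : k = n := by omega
          rw [hkn]
          linear_combination h
      obtain ⟨u, hu⟩ := IsAlgClosed.exists_pow_nat_eq (k := ℂ) (f 0) (by omega : 0 < n)
      obtain ⟨w, hw⟩ := IsAlgClosed.exists_pow_nat_eq (k := ℂ)
        (f n - f 0 * r ^ n) (by omega : 0 < n)
      have hu0 : u ≠ 0 := by
        intro h; apply h0; rw [← hu, h, zero_pow (by omega : n ≠ 0)]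
      have hw0 : w ≠ 0 := by
        intro h; apply hd; rw [← hw, h, zero_pow (by omega : n ≠ 0)]
      refine ⟨u, u * r, 0, w, ?_, fun k hk => ?_⟩
      · simp [mul_ne_zero hu0 hw0]
      · rcases Nat.lt_or_ge k n with hlt | hge
        · rw [hgeo k (by omega), mul_pow, ← mul_assoc, ← pow_add,
            Nat.sub_add_cancel hk, hu, zero_pow (by omega : n - k ≠ 0), zero_mul, add_zero]
        · have hkn : k = n := by omega
          rw [hkn, Nat.sub_self, pow_zero, one_mul, pow_zero, one_mul, mul_pow, hu, hw]
          ring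
    · -- c ≠ 0 : two distinct roots
      obtain ⟨s, hs⟩ := IsAlgClosed.exists_pow_nat_eq (k := ℂ)
        (b ^ 2 - 4 * a * c) (by norm_num : 0 < 2)
      have hs0 : s ≠ 0 := by
        intro h; apply hdisc; rw [← hs, h]; norm_num
      obtain ⟨r₀, r₁, hsum, hprod, hrne⟩ :
          ∃ r₀ r₁ : ℂ, r₀ + r₁ = -b / c ∧ r₀ * r₁ = a / c ∧ r₀ ≠ r₁ := by
        refine ⟨(-b + s) / (2 * c), (-b - s) / (2 * c), ?_, ?_, ?_⟩
        · rw [← add_div, div_eq_div_iff (mul_ne_zero two_ne_zero hc) hc]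
          ring
        · rw [div_mul_div_comm, div_eq_div_iff
            (mul_ne_zero (mul_ne_zero two_ne_zero hc) (mul_ne_zero two_ne_zero hc)) hc]
          linear_combination -c * hs
        · intro h
          apply hs0
          rw [div_eq_div_iff (mul_ne_zero two_ne_zero hc) (mul_ne_zero two_ne_zero hc)] at h
          have h2 : s * c = 0 := by linear_combination h / 4
          rcases mul_eq_zero.mp h2 with h3 | h3
          · exact h3
          · exact absurd h3 hc
      refine forward_main n hn f hnd r₀ r₁ hrne fun k hk => ?_
      have h1 := hrec k hk
      rw [hsum, hprod, div_mul_eq_mul_div, div_mul_eq_mul_div, div_sub_div_same,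
        eq_div_iff hc]
      linear_combination h1
  · rintro ⟨a₀, b₀, a₁, b₁, hdet, hf⟩
    have hdisc2 : (-(a₀ * b₁ + a₁ * b₀)) ^ 2 - 4 * (b₀ * b₁) * (a₀ * a₁) ≠ 0 := by
      intro h
      apply hdet
      have h2 : (a₀ * b₁ - a₁ * b₀) ^ 2 = 0 := by linear_combination h
      have h3 := pow_eq_zero_iff (n := 2) (by norm_num) |>.mp h2
      linear_combination h3
    refine ⟨b₀ * b₁, -(a₀ * b₁ + a₁ * b₀), a₀ * a₁, ?_, hdisc2, ?_⟩
    · intro h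
      simp only [Prod.mk_eq_zero] at h
      obtain ⟨h1, h2, h3⟩ := h
      apply hdisc2
      rw [h2, h1, h3]
      norm_num
    · intro k hk
      obtain ⟨m, hm⟩ : ∃ m, n = k + 2 + m := ⟨n - (k + 2), by omega⟩
      have e0 : n - k = m + 2 := by omega
      have e1 : n - (k + 1) = m + 1 := by omega
      have e2 : n - (k + 2) = m := by omega
      rw [hf k (by omega), hf (k + 1) (by omega), hf (k + 2) (by omega), e0, e1, e2]
      ring
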